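/- Let f(x) = E_i f_i(x) with each f_i convex and L-smooth, and suppose there is a common minimizer x⋆ with f_i'(x⋆) = 0 for all i (interpolation/over-parameterization). For the scheme y_{k+1} = (d_k/(d_k + δ_k L)) y_k + (δ_k L/(d_k + δ_k L)) x_k, x_{k+1} = x_k - δ_k f'_{i_k}(y_{k+1}), with d_{k+1} = d_k + δ_k L when δ_k ≤ 1/L and d_{k+1} = d_k + 2δ_k L - δ_k² L² otherwise, one has d_{k+1}(f(y_{k+1}) - f⋆) + (L/2) E_{i_k}‖x_{k+1} - x⋆‖² ≤ d_k (f(y_k) - f⋆) + (L/2)‖x_k - x⋆‖². -/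

import Mathlib

set_option maxHeartbeats 1000000

open Finset

section AuxGradient

open Set InnerProductSpace

variable {E : Type*} [NormedAddCommGroup E] [InnerProductSpace ℝ E] [CompleteSpace E]

local notation "⟪" x ", " y "⟫" => @inner ℝ _ _ x y

lemma line_hasDerivAt (f : E → ℝ) (f' : E → E)
    (hg : ∀ z, HasGradientAt f (f' z) z) (x v : E) (t : ℝ) :
    HasDerivAt (fun s : ℝ => f (x + s • v)) ⟪f' (x + t • v), v⟫ t := by
  have hc : HasDerivAt (fun s : ℝ => x + s • v) v t := by
    simpa using ((hasDerivAt_id t).smul_const v).const_add x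
  have hF : HasFDerivAt f (toDual ℝ E (f' (x + t • v))) (x + t • v) :=
    hasGradientAt_iff_hasFDerivAt.mp (hg _)
  simpa [toDual_apply_apply, Function.comp_def] using hF.comp_hasDerivAt t hc

lemma descent_lemma (L : ℝ) (hL : 0 < L) (f : E → ℝ) (f' : E → E)
    (hg : ∀ z, HasGradientAt f (f' z) z)
    (hs : ∀ a b, ‖f' a - f' b‖ ≤ L * ‖a - b‖) (x y : E) :
    f y ≤ f x + ⟪f' x, y - x⟫ + L / 2 * ‖y - x‖ ^ 2 := by
  set v := y - x with hv
  set h : ℝ → ℝ := fun t => f (x + t • v) - ⟪f' x, v⟫ * t - L / 2 * ‖v‖ ^ 2 * t ^ 2 with hh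
  have hder : ∀ t : ℝ, HasDerivAt h (⟪f' (x + t • v), v⟫ - ⟪f' x, v⟫ - L * ‖v‖ ^ 2 * t) t := by
    intro t
    have h1 := line_hasDerivAt f f' hg x v t
    have h2 : HasDerivAt (fun s : ℝ => ⟪f' x, v⟫ * s) ⟪f' x, v⟫ t := by
      simpa using (hasDerivAt_id t).const_mul ⟪f' x, v⟫
    have h3 : HasDerivAt (fun s : ℝ => L / 2 * ‖v‖ ^ 2 * s ^ 2) (L * ‖v‖ ^ 2 * t) t := by
      have := (hasDerivAt_pow 2 t).const_mul (L / 2 * ‖v‖ ^ 2)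
      refine this.congr_deriv ?_
      norm_num
      ring
    exact (h1.sub h2).sub h3
  have hdiff : Differentiable ℝ h := fun t => (hder t).differentiableAt
  have hanti : AntitoneOn h (Icc (0:ℝ) 1) := by
    apply antitoneOn_of_deriv_nonpos (convex_Icc 0 1) hdiff.continuous.continuousOn
      (hdiff.differentiableOn)
    intro t ht
    rw [interior_Icc] at ht
    rw [(hder t).deriv]
    have hb : ⟪f' (x + t • v), v⟫ - ⟪f' x, v⟫ ≤ L * ‖v‖ ^ 2 * t := by
      have h1 : ⟪f' (x + t • v) - f' x, v⟫ ≤ ‖f' (x + t • v) - f' x‖ * ‖v‖ :=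
        real_inner_le_norm _ _
      have h2 : ‖f' (x + t • v) - f' x‖ ≤ L * ‖t • v‖ := by
        simpa using hs (x + t • v) x
      have h3 : ‖t • v‖ = t * ‖v‖ := by
        rw [norm_smul, Real.norm_eq_abs, abs_of_pos ht.1]
      rw [inner_sub_left] at h1
      rw [h3] at h2
      nlinarith [mul_le_mul_of_nonneg_right h2 (norm_nonneg v), norm_nonneg v, sq_nonneg (‖v‖)]
    linarith
  have h01 : h 1 ≤ h 0 := hanti (by constructor <;> norm_num) (by constructor <;> norm_num)
    zero_le_one
  have e0 : h 0 = f x := by simp [hh]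
  have e1 : h 1 = f y - ⟪f' x, v⟫ - L / 2 * ‖v‖ ^ 2 := by
    simp [hh, hv]
  rw [e0, e1] at h01
  linarith

lemma convex_lower (f : E → ℝ) (f' : E → E)
    (hg : ∀ z, HasGradientAt f (f' z) z)
    (hconv : ConvexOn ℝ Set.univ f) (x y : E) :
    f x + ⟪f' x, y - x⟫ ≤ f y := by
  have hgc : ConvexOn ℝ Set.univ (fun t : ℝ => f (x + t • (y - x))) := by
    have heq : (fun t : ℝ => f (x + t • (y - x))) = f ∘ (AffineMap.lineMap x y) := by
      funext t
      simp only [Function.comp_apply, AffineMap.lineMap_apply_module]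
      congr 1
      module
    rw [heq]
    have := hconv.comp_affineMap (AffineMap.lineMap x y)
    simpa using this
  have hd := line_hasDerivAt f f' hg x (y - x) 0
  have hslope := hgc.le_slope_of_hasDerivAt (Set.mem_univ 0) (Set.mem_univ 1) zero_lt_one
    (by simpa using hd)
  rw [slope_def_field] at hslope
  simp at hslope
  linarith

lemma interp_ineq (L : ℝ) (hL : 0 < L) (f : E → ℝ) (f' : E → E)
    (hg : ∀ z, HasGradientAt f (f' z) z)
    (hconv : ConvexOn ℝ Set.univ f)
    (hs : ∀ a b, ‖f' a - f' b‖ ≤ L * ‖a - b‖) (x y : E) :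
    ‖f' y - f' x‖ ^ 2 ≤ 2 * L * (f y - f x - ⟪f' x, y - x⟫) := by
  set ψ : E → ℝ := fun z => f z - ⟪f' x, z⟫ with hψ
  set ψ' : E → E := fun z => f' z - f' x with hψ'
  have hψg : ∀ z, HasGradientAt ψ (ψ' z) z := by
    intro z
    have h1 : HasFDerivAt f (toDual ℝ E (f' z)) z := hasGradientAt_iff_hasFDerivAt.mp (hg z)
    have h2 : HasFDerivAt (fun w : E => ⟪f' x, w⟫) (toDual ℝ E (f' x)) z := by
      have := (toDual ℝ E (f' x)).hasFDerivAt (x := z)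
      convert this using 1
      funext w
      simp [toDual_apply_apply]
    rw [hψ, hasGradientAt_iff_hasFDerivAt]
    have := h1.sub h2
    rw [show ψ' z = f' z - f' x from rfl, map_sub]
    exact this
  have hψs : ∀ a b, ‖ψ' a - ψ' b‖ ≤ L * ‖a - b‖ := by
    intro a b
    have : ψ' a - ψ' b = f' a - f' b := by rw [hψ']; dsimp only; abel
    rw [this]; exact hs a b
  have hψc : ConvexOn ℝ Set.univ ψ := by
    have hlin : ConcaveOn ℝ Set.univ (fun z : E => ⟪f' x, z⟫) := by
      refine ⟨convex_univ, ?_⟩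
      intro a _ b _ p q hp hq hpq
      simp [inner_add_right, real_inner_smul_right]
    exact hconv.sub hlin
  set G := f' y - f' x with hG
  set u := y - (1 / L) • G with hu
  have h1 : ψ x ≤ ψ u := by
    have := convex_lower ψ ψ' hψg hψc x u
    have hz : ψ' x = 0 := by rw [hψ']; abel
    rw [hz] at this
    simpa using this
  have h2 : ψ u ≤ ψ y + ⟪ψ' y, u - y⟫ + L / 2 * ‖u - y‖ ^ 2 :=
    descent_lemma L hL ψ ψ' hψg hψs y u
  have huy : u - y = -((1 / L) • G) := by rw [hu]; abel
  have hinner : ⟪ψ' y, u - y⟫ = -(1 / L) * ‖G‖ ^ 2 := by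
    rw [huy]
    have : ψ' y = G := rfl
    rw [this, inner_neg_right, real_inner_smul_right, real_inner_self_eq_norm_sq]
    ring
  have hnorm : ‖u - y‖ ^ 2 = (1 / L) ^ 2 * ‖G‖ ^ 2 := by
    rw [huy, norm_neg, norm_smul, Real.norm_eq_abs, abs_of_pos (by positivity : (0:ℝ) < 1 / L)]
    ring
  rw [hinner, hnorm] at h2
  have hψx : ψ x = f x - ⟪f' x, x⟫ := rfl
  have hψy : ψ y = f y - ⟪f' x, y⟫ := rfl
  have key : 1 / (2 * L) * ‖G‖ ^ 2 ≤ (f y - ⟪f' x, y⟫) - (f x - ⟪f' x, x⟫) := by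
    rw [hψx] at h1
    rw [hψy] at h2
    have harith : -(1 / L) * ‖G‖ ^ 2 + L / 2 * ((1 / L) ^ 2 * ‖G‖ ^ 2)
        = -(1 / (2 * L)) * ‖G‖ ^ 2 := by
      field_simp
      ring
    nlinarith [h1.trans h2]
  have hir : ⟪f' x, y - x⟫ = ⟪f' x, y⟫ - ⟪f' x, x⟫ := inner_sub_right _ _ _
  rw [hir]
  have hL' : (0:ℝ) ≤ 2 * L := by positivity
  have h3 := mul_le_mul_of_nonneg_left key hL'
  have h4 : 2 * L * (1 / (2 * L) * ‖G‖ ^ 2) = ‖G‖ ^ 2 := by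
    field_simp
  rw [h4] at h3
  nlinarith [h3]

end AuxGradient

local notation "⟪" x ", " y "⟫" => @inner ℝ _ _ x y

/-- One-step potential inequality for primal-averaging SGD under
over-parameterization (interpolation): all `f i` share the minimizer `xstar`. -/
theorem overparam_primal_averaging_potential {d n : ℕ} (hn : 0 < n)
    (L : ℝ) (hL : 0 < L)
    (fi : Fin n → EuclideanSpace ℝ (Fin d) → ℝ)
    (fi' : Fin n → EuclideanSpace ℝ (Fin d) → EuclideanSpace ℝ (Fin d))
    (hgrad : ∀ i x, HasGradientAt (fi i) (fi' i x) x)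
    (hconv : ∀ i, ConvexOn ℝ Set.univ (fi i))
    (hsmooth : ∀ i x y, ‖fi' i x - fi' i y‖ ≤ L * ‖x - y‖)
    (xstar : EuclideanSpace ℝ (Fin d)) (hstar : ∀ i, fi' i xstar = 0)
    (f : EuclideanSpace ℝ (Fin d) → ℝ)
    (hf : ∀ x, f x = (n : ℝ)⁻¹ * ∑ i, fi i x)
    (δ dk d1 : ℝ) (hδ : 0 ≤ δ) (hdk : 0 ≤ dk)
    (hd1 : d1 = if δ ≤ 1 / L then dk + δ * L else dk + 2 * δ * L - δ ^ 2 * L ^ 2)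
    (xk yk y1 : EuclideanSpace ℝ (Fin d))
    (hy1 : y1 = (dk / (dk + δ * L)) • yk + (δ * L / (dk + δ * L)) • xk)
    (x1 : Fin n → EuclideanSpace ℝ (Fin d))
    (hx1 : ∀ i, x1 i = xk - δ • fi' i y1) :
    d1 * (f y1 - f xstar)
        + L / 2 * ((n : ℝ)⁻¹ * ∑ i, ‖x1 i - xstar‖ ^ 2)
      ≤ dk * (f yk - f xstar) + L / 2 * ‖xk - xstar‖ ^ 2 := by
  have hn' : (n : ℝ) ≠ 0 := Nat.cast_ne_zero.mpr hn.ne'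
  rcases eq_or_lt_of_le hδ with h0 | hδpos
  · -- δ = 0
    have hδ0 : δ = 0 := h0.symm
    subst hδ0
    rw [if_pos (by positivity)] at hd1
    have hx1' : ∀ i, x1 i = xk := by intro i; simp [hx1 i]
    have hsum : (n:ℝ)⁻¹ * ∑ i : Fin n, ‖x1 i - xstar‖ ^ 2 = ‖xk - xstar‖ ^ 2 := by
      simp only [hx1', Finset.sum_const, Finset.card_univ, Fintype.card_fin, nsmul_eq_mul]
      rw [← mul_assoc, inv_mul_cancel₀ hn', one_mul]
    rw [hsum, hd1]
    have hmain : dk * (f y1 - f xstar) ≤ dk * (f yk - f xstar) := by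
      rcases eq_or_lt_of_le hdk with hdk0 | hdkpos
      · rw [← hdk0]; simp
      · have hyy : y1 = yk := by
          rw [hy1]
          simp [div_self (ne_of_gt hdkpos)]
        rw [hyy]
    nlinarith [hmain]
  · -- δ > 0
    have hc : (0:ℝ) < dk + δ * L := by positivity
    have key_i : ∀ i, d1 * (fi i y1 - fi i xstar) + L / 2 * ‖x1 i - xstar‖ ^ 2
        ≤ dk * (fi i yk - fi i xstar) + L / 2 * ‖xk - xstar‖ ^ 2 := by
      intro i
      set g := fi' i y1 with hg0
      set A := fi i y1 with hA
      set B := fi i xstar with hB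
      set C := fi i yk with hC
      set s := ‖g‖ ^ 2 with hss
      have hs0 : (0:ℝ) ≤ s := by positivity
      set r := ⟪g, y1 - xstar⟫ with hr
      set q := ⟪g, y1 - yk⟫ with hq
      have hF1 : s ≤ 2 * L * (B - A + r) := by
        have h := interp_ineq L hL (fi i) (fi' i) (hgrad i) (hconv i) (hsmooth i) y1 xstar
        rw [hstar i] at h
        have hi2 : ⟪g, xstar - y1⟫ = -r := by
          rw [hr, ← inner_neg_right]; congr 1; abel
        rw [hi2] at h
        simpa using h
      have hF2 : s ≤ 2 * L * (A - B) := by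
        have h := interp_ineq L hL (fi i) (fi' i) (hgrad i) (hconv i) (hsmooth i) xstar y1
        rw [hstar i] at h
        simpa using h
      have hF3 : A - q ≤ C := by
        have h := interp_ineq L hL (fi i) (fi' i) (hgrad i) (hconv i) (hsmooth i) y1 yk
        have hi3 : ⟪g, yk - y1⟫ = -q := by
          rw [hq, ← inner_neg_right]; congr 1; abel
        rw [hi3] at h
        nlinarith [sq_nonneg ‖fi' i yk - g‖, h]
      have hF4 : ‖x1 i - xstar‖ ^ 2
          = ‖xk - xstar‖ ^ 2 - 2 * δ * ⟪g, xk - xstar⟫ + δ ^ 2 * s := by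
        rw [hx1 i]
        have h : xk - δ • g - xstar = (xk - xstar) - δ • g := by abel
        have h2 : ⟪xk - xstar, δ • g⟫ = δ * ⟪g, xk - xstar⟫ := by
          rw [real_inner_smul_right, real_inner_comm]
        rw [h, norm_sub_sq_real, h2, norm_smul, Real.norm_eq_abs, abs_of_pos hδpos, mul_pow, hss]
        ring
      have hw : (L * δ) • (xk - y1) = dk • (y1 - yk) := by
        have hc' : dk + δ * L ≠ 0 := ne_of_gt hc
        rw [hy1]
        match_scalars <;> field_simp
        all_goals first | ring1 | (left; trivial) | (left; ring1)
      have hF5 : L * δ * ⟪g, xk - y1⟫ = dk * q := by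
        have h : ⟪g, (L * δ) • (xk - y1)⟫ = ⟪g, dk • (y1 - yk)⟫ := by rw [hw]
        rw [real_inner_smul_right, real_inner_smul_right] at h
        rw [hq]
        exact h
      have hi1 : ⟪g, xk - xstar⟫ = ⟪g, xk - y1⟫ + r := by
        rw [hr, ← inner_add_right]; congr 1; abel
      have hP : L * δ * ⟪g, xk - xstar⟫ = dk * q + L * δ * r := by
        rw [hi1, mul_add, hF5]
      rw [hF4]
      have h_t1 : dk * (A - C) ≤ dk * q := mul_le_mul_of_nonneg_left (by linarith) hdk
      have h_t2 : δ * s ≤ δ * (2 * L * (B - A + r)) := mul_le_mul_of_nonneg_left hF1 hδpos.le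
      rw [hd1]
      split_ifs with hcase
      · have hLδ : δ * L ≤ 1 := by
          rw [le_div_iff₀ hL] at hcase; linarith
        have h_t3 : 0 ≤ (δ * s) * (1 - δ * L) :=
          mul_nonneg (mul_nonneg hδpos.le hs0) (by linarith)
        nlinarith [h_t1, h_t2, h_t3, hP]
      · have hLδ : 1 < δ * L := by
          push_neg at hcase
          rw [div_lt_iff₀ hL] at hcase
          linarith
        have h_t4 : 0 ≤ (δ * (δ * L - 1)) * (2 * L * (A - B) - s) :=
          mul_nonneg (mul_nonneg hδpos.le (by linarith)) (by linarith)
        nlinarith [h_t1, h_t2, h_t4, hP]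
    -- sum up
    have hsum := Finset.sum_le_sum (fun i (_ : i ∈ Finset.univ) => key_i i)
    have hLHS : d1 * (f y1 - f xstar) + L / 2 * ((n : ℝ)⁻¹ * ∑ i, ‖x1 i - xstar‖ ^ 2)
        = (n:ℝ)⁻¹ * ∑ i, (d1 * (fi i y1 - fi i xstar) + L / 2 * ‖x1 i - xstar‖ ^ 2) := by
      rw [hf, hf]
      simp only [Finset.sum_add_distrib, ← Finset.mul_sum, Finset.sum_sub_distrib]
      ring
    have hRHS : dk * (f yk - f xstar) + L / 2 * ‖xk - xstar‖ ^ 2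
        = (n:ℝ)⁻¹ * ∑ i, (dk * (fi i yk - fi i xstar) + L / 2 * ‖xk - xstar‖ ^ 2) := by
      rw [hf, hf]
      simp only [Finset.sum_add_distrib, ← Finset.mul_sum, Finset.sum_sub_distrib,
        Finset.sum_const, Finset.card_univ, Fintype.card_fin, nsmul_eq_mul]
      field_simp
    rw [hLHS, hRHS]
    exact mul_le_mul_of_nonneg_left hsum (by positivity)
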